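/- arXiv:math/0211381 — 3 statements merged into one kernel-verified Lean document; each statement's English description precedes it below -/
import Mathlib

section
/- Let (X,d) be a complete metric space and M : X → [0,∞) a locally bounded function. Then for each σ > 0 and each u ∈ X with M(u) > 0, there exists v ∈ X such that (i) d(u,v) ≤ 2/(σ·M(u)), (ii) M(v) ≥ M(u), and (iii) for all x ∈ X, d(x,v) ≤ 1/(σ·M(v)) implies M(x) ≤ 2·M(v). -/
/-- Metric-space lemma (Gromov): in a complete metric space, for a nonnegative
locally bounded `M`, any `σ > 0` and `u` with `M u > 0`, there is `v` with
`d(u,v) ≤ 2/(σ M u)`, `M v ≥ M u`, and `M ≤ 2 M v` on the ball of radius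
`1/(σ M v)` around `v`. -/
theorem metric_space_lemma {X : Type*} [MetricSpace X] [CompleteSpace X]
    (M : X → ℝ) (hM0 : ∀ x, 0 ≤ M x)
    (hloc : ∀ x : X, ∃ U ∈ nhds x, ∃ C : ℝ, ∀ y ∈ U, M y ≤ C)
    (σ : ℝ) (hσ : 0 < σ) (u : X) (hu : 0 < M u) :
    ∃ v : X, dist u v ≤ 2 / (σ * M u) ∧ M u ≤ M v ∧
      ∀ x : X, dist x v ≤ 1 / (σ * M v) → M x ≤ 2 * M v := by
  by_contra hcon
  push_neg at hcon
  have hσM : 0 < σ * M u := mul_pos hσ hu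
  set I : ℕ → X → Prop := fun n v =>
    2 ^ n * M u ≤ M v ∧ dist u v ≤ (2 - 2 / 2 ^ n) / (σ * M u) with hIdef
  have step : ∀ n v, I n v → ∃ w, I (n + 1) w ∧ dist v w ≤ 1 / (σ * 2 ^ n * M u) := by
    intro n v ⟨h1, h2⟩
    have h2n : (1 : ℝ) ≤ 2 ^ n := one_le_pow₀ (by norm_num)
    have h2np : (0 : ℝ) < 2 ^ n := by positivity
    have hMv : 0 < M v := lt_of_lt_of_le (by positivity) h1
    have hMuv : M u ≤ M v := le_trans (le_mul_of_one_le_left hu.le h2n) h1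
    have hd : dist u v ≤ 2 / (σ * M u) := by
      refine h2.trans ?_
      gcongr
      have : (0:ℝ) < 2 / 2 ^ n := by positivity
      linarith
    obtain ⟨x, hx1, hx2⟩ := hcon v hd hMuv
    have hx1' : dist x v ≤ 1 / (σ * 2 ^ n * M u) := by
      refine hx1.trans ?_
      rw [div_le_div_iff₀ (by positivity) (by positivity)]
      have : σ * 2 ^ n * M u ≤ σ * M v := by
        rw [mul_assoc]
        exact mul_le_mul_of_nonneg_left h1 hσ.le
      linarith
    refine ⟨x, ⟨?_, ?_⟩, ?_⟩
    · calc 2 ^ (n + 1) * M u = 2 * (2 ^ n * M u) := by ring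
        _ ≤ 2 * M v := by linarith
        _ ≤ M x := hx2.le
    · calc dist u x ≤ dist u v + dist v x := dist_triangle u v x
        _ ≤ (2 - 2 / 2 ^ n) / (σ * M u) + 1 / (σ * 2 ^ n * M u) := by
            rw [dist_comm v x]; linarith
        _ = (2 - 2 / 2 ^ (n + 1)) / (σ * M u) := by
            field_simp
            ring
    · rw [dist_comm]; exact hx1'
  choose g hg1 hg2 using step
  have h0 : I 0 u := by
    constructor
    · simp
    · simp [dist_self]
  let F : ∀ n : ℕ, {v : X // I n v} :=
    fun n => Nat.rec ⟨u, h0⟩ (fun n p => ⟨g n p.1 p.2, hg1 n p.1 p.2⟩) n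
  set f : ℕ → X := fun n => (F n).1 with hf
  have hfI : ∀ n, I n (f n) := fun n => (F n).2
  have hfd : ∀ n, dist (f n) (f (n + 1)) ≤ (1 / (σ * M u)) * (1 / 2) ^ n := by
    intro n
    have := hg2 n (F n).1 (F n).2
    have heq : (1 / (σ * M u)) * (1 / 2) ^ n = 1 / (σ * 2 ^ n * M u) := by
      rw [div_pow, one_pow]
      field_simp
    rw [heq]
    exact this
  have hcauchy : CauchySeq f :=
    cauchySeq_of_le_geometric (1 / 2) (1 / (σ * M u)) (by norm_num) hfd
  obtain ⟨v, hv⟩ := cauchySeq_tendsto_of_complete hcauchy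
  obtain ⟨U, hU, C, hC⟩ := hloc v
  have hev : ∀ᶠ n in Filter.atTop, f n ∈ U := hv.eventually_mem hU
  obtain ⟨N, hN⟩ := hev.exists_forall_of_atTop
  obtain ⟨n0, hn0⟩ := pow_unbounded_of_one_lt (C / M u) (by norm_num : (1:ℝ) < 2)
  set n := max N n0 with hn
  have h1 : M (f n) ≤ C := hC _ (hN n (le_max_left _ _))
  have h2 : C < M (f n) := by
    have hmono : (2:ℝ) ^ n0 ≤ 2 ^ n := by
      apply pow_le_pow_right₀ (by norm_num) (le_max_right _ _)
    have : C < 2 ^ n * M u := by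
      rw [div_lt_iff₀ hu] at hn0
      nlinarith
    exact lt_of_lt_of_le this (hfI n).1
  linarith
end

section
/- In a complete metric space (X,d) with M : X → [0,∞) locally bounded, σ > 0, u ∈ X with M(u) > 0: if for every v ∈ X satisfying d(u,v) ≤ 2/(σ·M(u)) and M(v) ≥ M(u) there is some x with d(x,v) ≤ 1/(σ·M(v)) and M(x) > 2·M(v), then one can construct a sequence (v_n) with v_0 = u, M(v_{n+1}) ≥ 2·M(v_n), and d(v_{n+1}, v_n) ≤ 2^{-n}/(σ·M(u)); such a sequence is Cauchy, yet M(v_n) ≥ 2^n·M(u) → ∞, contradicting local boundedness of M at the limit. Hence such a v must exist. -/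
/-- Proof-by-contradiction structure of the metric-space lemma: if every
candidate `v` fails condition (iii), then one can construct a sequence
`v_n` with `v 0 = u`, `M (v (n+1)) ≥ 2 M (v n)` and
`d(v (n+1), v n) ≤ 2⁻ⁿ/(σ M u)`; such a sequence is Cauchy while `M (v n) → ∞`,
contradicting local boundedness; hence the desired `v` exists. -/
theorem metric_space_lemma_contradiction {X : Type*} [MetricSpace X] [CompleteSpace X]
    (M : X → ℝ) (hM0 : ∀ x, 0 ≤ M x)
    (hloc : ∀ x : X, ∃ U ∈ nhds x, ∃ C : ℝ, ∀ y ∈ U, M y ≤ C)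
    (σ : ℝ) (hσ : 0 < σ) (u : X) (hu : 0 < M u)
    (hneg : ∀ v : X, dist u v ≤ 2 / (σ * M u) → M u ≤ M v →
      ∃ x : X, dist x v ≤ 1 / (σ * M v) ∧ 2 * M v < M x) :
    (∃ v : ℕ → X, v 0 = u ∧
        (∀ n : ℕ, 2 * M (v n) ≤ M (v (n + 1))) ∧
        (∀ n : ℕ, dist (v (n + 1)) (v n) ≤ (1 / 2 ^ n) * (1 / (σ * M u)))) ∧
      (∀ v : ℕ → X, v 0 = u →
        (∀ n : ℕ, 2 * M (v n) ≤ M (v (n + 1))) →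
        (∀ n : ℕ, dist (v (n + 1)) (v n) ≤ (1 / 2 ^ n) * (1 / (σ * M u))) →
        CauchySeq v ∧ (∀ n : ℕ, 2 ^ n * M u ≤ M (v n)) ∧
          Filter.Tendsto (fun n => M (v n)) Filter.atTop Filter.atTop) ∧
      False := by
  have hc : 0 < σ * M u := mul_pos hσ hu
  -- the invariant carried along the construction
  set Good : X → ℕ → Prop :=
    fun x n => dist u x ≤ (2 - 2 * (1 / 2) ^ n) / (σ * M u) ∧ 2 ^ n * M u ≤ M x with hGood
  -- the recursion step
  have step : ∀ n : ℕ, ∀ x : X, ∃ y : X, Good x n →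
      (Good y (n + 1) ∧ 2 * M x ≤ M y ∧ dist y x ≤ (1 / 2 ^ n) * (1 / (σ * M u))) := by
    intro n x
    by_cases hx : Good x n
    · obtain ⟨hd, hm⟩ := hx
      have h1 : (1 : ℝ) ≤ 2 ^ n := one_le_pow₀ one_le_two
      have hMu : M u ≤ M x := le_trans (le_mul_of_one_le_left hu.le h1) hm
      have hMx : 0 < M x := lt_of_lt_of_le hu hMu
      have hd2 : dist u x ≤ 2 / (σ * M u) := by
        refine le_trans hd ?_
        have h0 : 0 ≤ 2 * ((1:ℝ) / 2) ^ n := by positivity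
        gcongr
        · linarith
      obtain ⟨y, hy1, hy2⟩ := hneg x hd2 hMu
      have hstep : dist y x ≤ (1 / 2 ^ n) * (1 / (σ * M u)) := by
        refine le_trans hy1 ?_
        rw [one_div, one_div_mul_one_div]
        rw [one_div, inv_le_inv₀ (by positivity) (by positivity)]
        calc (2:ℝ) ^ n * (σ * M u) = σ * (2 ^ n * M u) := by ring
        _ ≤ σ * M x := by nlinarith
      refine ⟨y, fun _ => ⟨⟨?_, ?_⟩, hy2.le, hstep⟩⟩
      · calc dist u y ≤ dist u x + dist x y := dist_triangle u x y
          _ ≤ (2 - 2 * (1 / 2) ^ n) / (σ * M u) + (1 / 2 ^ n) * (1 / (σ * M u)) := by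
              rw [dist_comm x y]; exact add_le_add hd hstep
          _ = (2 - 2 * (1 / 2) ^ (n + 1)) / (σ * M u) := by
              field_simp
              have h2 : ((1:ℝ) / 2) ^ n * 2 ^ n = 1 := by rw [← mul_pow]; norm_num
              linear_combination (-1:ℝ) * h2
      · calc (2:ℝ) ^ (n + 1) * M u = 2 * (2 ^ n * M u) := by ring
          _ ≤ 2 * M x := by linarith
          _ ≤ M y := hy2.le
    · exact ⟨x, fun h => absurd h hx⟩
  choose F hF using step
  set w : ℕ → X := fun n => Nat.rec u (fun n x => F n x) n with hw
  have hw0 : w 0 = u := rfl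
  have hwsucc : ∀ n, w (n + 1) = F n (w n) := fun n => rfl
  have hGoodw : ∀ n, Good (w n) n := by
    intro n
    induction n with
    | zero =>
      refine ⟨?_, by simp [hw0]⟩
      have : dist u (w 0) = 0 := by simp [hw0]
      rw [this]
      norm_num
    | succ n ih => exact ((hF n (w n)) ih).1
  have hwgrow : ∀ n, 2 * M (w n) ≤ M (w (n + 1)) := fun n => ((hF n (w n)) (hGoodw n)).2.1
  have hwdist : ∀ n, dist (w (n + 1)) (w n) ≤ (1 / 2 ^ n) * (1 / (σ * M u)) :=
    fun n => ((hF n (w n)) (hGoodw n)).2.2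
  -- the second part: general properties of any such sequence
  have main : ∀ v : ℕ → X, v 0 = u →
      (∀ n : ℕ, 2 * M (v n) ≤ M (v (n + 1))) →
      (∀ n : ℕ, dist (v (n + 1)) (v n) ≤ (1 / 2 ^ n) * (1 / (σ * M u))) →
      CauchySeq v ∧ (∀ n : ℕ, 2 ^ n * M u ≤ M (v n)) ∧
        Filter.Tendsto (fun n => M (v n)) Filter.atTop Filter.atTop := by
    intro v hv0 hvg hvd
    have hgrow : ∀ n : ℕ, 2 ^ n * M u ≤ M (v n) := by
      intro n
      induction n with
      | zero => simp [hv0]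
      | succ n ih =>
        calc (2:ℝ) ^ (n + 1) * M u = 2 * (2 ^ n * M u) := by ring
          _ ≤ 2 * M (v n) := by linarith
          _ ≤ M (v (n + 1)) := hvg n
    have hcauchy : CauchySeq v := by
      refine cauchySeq_of_le_geometric (1 / 2) (1 / (σ * M u)) (by norm_num) ?_
      intro n
      rw [dist_comm]
      calc dist (v (n + 1)) (v n) ≤ (1 / 2 ^ n) * (1 / (σ * M u)) := hvd n
        _ = 1 / (σ * M u) * (1 / 2) ^ n := by rw [div_pow, one_pow]; ring
    refine ⟨hcauchy, hgrow, ?_⟩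
    refine Filter.tendsto_atTop_mono hgrow ?_
    exact (tendsto_pow_atTop_atTop_of_one_lt (by norm_num : (1:ℝ) < 2)).atTop_mul_const hu
  refine ⟨⟨w, hw0, hwgrow, hwdist⟩, main, ?_⟩
  -- derive the contradiction
  obtain ⟨hcauchy, _, htend⟩ := main w hw0 hwgrow hwdist
  obtain ⟨L, hL⟩ := cauchySeq_tendsto_of_complete hcauchy
  obtain ⟨U, hU, C, hC⟩ := hloc L
  have hmem : ∀ᶠ n in Filter.atTop, w n ∈ U := hL.eventually_mem hU
  have hbig : ∀ᶠ n in Filter.atTop, C < M (w n) :=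
    htend.eventually (Filter.eventually_gt_atTop C)
  obtain ⟨n, h1, h2⟩ := (hmem.and hbig).exists
  exact absurd (hC _ h1) (not_le.mpr h2)
end

section
/- Let h(u) = Σ_{l=0}^∞ η_l·u^l be entire, α, β ∈ ℂ with |α| > 1 and |β| < |α|^N for an integer N ≥ 1. For each n define ψ_n(u) = Σ_{k=0}^{n-1} β^k · R_N(α^{−1−k}·u), where R_N(u) = Σ_{l=N}^∞ η_l·u^l is the N-th remainder of h. Then ψ_n converges pointwise (indeed uniformly on compact subsets of ℂ) as n → ∞ to ψ(u) = Σ_{l=N}^∞ η_l/(α^l − β)·u^l. -/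
open Finset Filter

/-- The partial renormalizations `ψ_n(u) = Σ_{k<n} βᵏ R_N(α^{−1−k} u)` converge,
uniformly on compact subsets of `ℂ`, to `ψ(u) = Σ_{l ≥ N} η_l/(αˡ − β) uˡ`. -/
theorem psi_n_tendsto_psi (η : ℕ → ℂ) (α β : ℂ) (N : ℕ) (hN : 1 ≤ N)
    (hα : 1 < ‖α‖) (hβN : ‖β‖ < ‖α‖ ^ N)
    (hentire : ∀ u : ℂ, Summable (fun l : ℕ => η l * u ^ l))
    (R : ℂ → ℂ) (hR : ∀ u : ℂ, HasSum (fun l : ℕ => if N ≤ l then η l * u ^ l else 0) (R u))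
    (ψ : ℂ → ℂ)
    (hψ : ∀ u : ℂ, HasSum (fun l : ℕ => if N ≤ l then η l / (α ^ l - β) * u ^ l else 0) (ψ u)) :
    ∀ K : Set ℂ, IsCompact K →
      TendstoUniformlyOn
        (fun (n : ℕ) (u : ℂ) => ∑ k ∈ Finset.range n, β ^ k * R (α ^ (-1 - (k : ℤ)) * u))
        ψ atTop K := by
  have hA : 1 < ‖α‖ := by exact hα
  have hA0 : (0:ℝ) < ‖α‖ := lt_trans one_pos hA
  have hαne : α ≠ 0 := by
    intro h
    rw [h, norm_zero] at hA0
    exact lt_irrefl _ hA0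
  have hβ' : ‖β‖ < ‖α‖ ^ N := by exact hβN
  set b : ℝ := ‖α‖⁻¹ with hbdef
  have hb0 : 0 < b := inv_pos.mpr hA0
  have hb1 : b < 1 := inv_lt_one_of_one_lt₀ hA
  -- absolute summability of the Taylor coefficients at any radius
  have habs : ∀ c : ℝ, 0 ≤ c → Summable (fun l : ℕ => ‖η l‖ * c ^ l) := by
    intro c hc
    have h2 : Summable (fun l : ℕ => η l * ((2*c+1 : ℝ) : ℂ) ^ l) := hentire _
    have hten : Tendsto (fun l : ℕ => ‖η l * ((2*c+1:ℝ):ℂ) ^ l‖) atTop (nhds 0) := by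
      simpa using h2.tendsto_atTop_zero.norm
    obtain ⟨B, hB⟩ := hten.bddAbove_range
    have hBl : ∀ l : ℕ, ‖η l‖ * (2*c+1) ^ l ≤ B := by
      intro l
      have h1 : ‖η l * ((2*c+1:ℝ):ℂ) ^ l‖ ≤ B := hB (Set.mem_range_self l)
      have h2' : ‖η l * ((2*c+1:ℝ):ℂ) ^ l‖ = ‖η l‖ * (2*c+1) ^ l := by
        rw [norm_mul, norm_pow, Complex.norm_real, Real.norm_eq_abs,
          abs_of_nonneg (by linarith)]
      rwa [h2'] at h1
    have hr0 : (0:ℝ) ≤ c / (2*c+1) := by positivity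
    have hr1 : c / (2*c+1) < 1 := by
      rw [div_lt_one (by linarith)]; linarith
    apply Summable.of_nonneg_of_le (fun l => by positivity) ?_
      ((summable_geometric_of_lt_one hr0 hr1).mul_left B)
    intro l
    have h2c : (2*c+1:ℝ) ≠ 0 := by linarith
    have hkey : ‖η l‖ * c ^ l = (‖η l‖ * (2*c+1) ^ l) * (c / (2*c+1)) ^ l := by
      rw [div_pow, mul_assoc, mul_div_assoc', mul_div_cancel_left₀ _ (pow_ne_zero _ h2c)]
    rw [hkey]
    exact mul_le_mul_of_nonneg_right (hBl l) (by positivity)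
  intro K hK
  obtain ⟨r, hr⟩ := hK.isBounded.subset_closedBall 0
  set C : ℝ := max r 0 with hCdef
  have hCnn : (0:ℝ) ≤ C := le_max_right _ _
  have hC : ∀ u ∈ K, ‖u‖ ≤ C := by
    intro u hu
    have := hr hu
    rw [Metric.mem_closedBall, dist_zero_right] at this
    exact le_trans this (le_max_left _ _)
  have hTsum : Summable (fun l : ℕ => ‖η l‖ * (C*b) ^ l) := habs (C*b) (by positivity)
  have hTh : HasSum (fun l : ℕ => ‖η l‖ * (C*b) ^ l) (∑' l : ℕ, ‖η l‖ * (C*b) ^ l) :=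
    hTsum.hasSum
  set T : ℝ := ∑' l : ℕ, ‖η l‖ * (C*b) ^ l with hTdef
  have hT0 : 0 ≤ T := tsum_nonneg (fun l => by positivity)
  have hrr : ‖β‖ * b ^ N < 1 := by
    have hbN : b ^ N = (‖α‖ ^ N)⁻¹ := by rw [hbdef, inv_pow]
    rw [hbN, ← div_eq_mul_inv, div_lt_one (by positivity)]
    exact hβ'
  have hM : Summable (fun k : ℕ => (‖β‖ * b ^ N) ^ k * T) :=
    (summable_geometric_of_lt_one (by positivity) hrr).mul_right T
  -- termwise bound
  have hterm : ∀ (k l : ℕ) (u : ℂ), ‖u‖ ≤ C →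
      ‖(if N ≤ l then η l * (α ^ (-1 - (k:ℤ)) * u) ^ l else 0)‖
        ≤ (b ^ N) ^ k * (‖η l‖ * (C*b) ^ l) := by
    intro k l u hu
    by_cases hl : N ≤ l
    · rw [if_pos hl, norm_mul, norm_pow, norm_mul]
      have hz : ‖α ^ (-1 - (k:ℤ))‖ = b ^ (1+k) := by
        rw [norm_zpow]
        have he : (-1 - (k:ℤ)) = -((1+k : ℕ) : ℤ) := by push_cast; ring
        rw [he, zpow_neg, zpow_natCast, hbdef, inv_pow]
      rw [hz]
      have key : (b ^ (1+k) * ‖u‖) ^ l ≤ (b ^ N) ^ k * (C*b) ^ l := by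
        calc (b ^ (1+k) * ‖u‖) ^ l = b ^ ((1+k)*l) * ‖u‖ ^ l := by
              rw [mul_pow, pow_mul]
          _ ≤ b ^ ((1+k)*l) * C ^ l :=
              mul_le_mul_of_nonneg_left (pow_le_pow_left₀ (norm_nonneg u) hu l)
                (by positivity)
          _ ≤ b ^ (N*k + l) * C ^ l := by
              apply mul_le_mul_of_nonneg_right ?_ (by positivity)
              apply pow_le_pow_of_le_one hb0.le hb1.le
              have h1 : N * k ≤ l * k := Nat.mul_le_mul_right k hl
              nlinarith [h1]
          _ = (b ^ N) ^ k * (C*b) ^ l := by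
              rw [← pow_mul, mul_pow, pow_add]; ring
      calc ‖η l‖ * (b ^ (1+k) * ‖u‖) ^ l
          ≤ ‖η l‖ * ((b ^ N) ^ k * (C*b) ^ l) :=
            mul_le_mul_of_nonneg_left key (norm_nonneg _)
        _ = (b ^ N) ^ k * (‖η l‖ * (C*b) ^ l) := by ring
    · rw [if_neg hl, norm_zero]
      positivity
  -- bound on R
  have hRb : ∀ (k : ℕ) (u : ℂ), ‖u‖ ≤ C →
      ‖R (α ^ (-1 - (k:ℤ)) * u)‖ ≤ (b ^ N) ^ k * T := by
    intro k u hu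
    rw [← (hR (α ^ (-1 - (k:ℤ)) * u)).tsum_eq]
    exact tsum_of_norm_bounded (hTh.mul_left ((b ^ N) ^ k)) (fun l => hterm k l u hu)
  -- the uniform bound
  have hbound : ∀ (k : ℕ) (u : ℂ), u ∈ K →
      ‖β ^ k * R (α ^ (-1 - (k:ℤ)) * u)‖ ≤ (‖β‖ * b ^ N) ^ k * T := by
    intro k u hu
    rw [norm_mul, norm_pow]
    calc ‖β‖ ^ k * ‖R (α ^ (-1 - (k:ℤ)) * u)‖
        ≤ ‖β‖ ^ k * ((b ^ N) ^ k * T) :=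
          mul_le_mul_of_nonneg_left (hRb k u (hC u hu)) (by positivity)
      _ = (‖β‖ * b ^ N) ^ k * T := by rw [mul_pow]; ring
  -- pointwise identification of the limit
  have hpt : ∀ u : ℂ, ‖u‖ ≤ C →
      HasSum (fun k : ℕ => β ^ k * R (α ^ (-1 - (k:ℤ)) * u)) (ψ u) := by
    intro u hu
    set F : ℕ × ℕ → ℂ :=
      fun p => β ^ p.1 * (if N ≤ p.2 then η p.2 * (α ^ (-1 - (p.1:ℤ)) * u) ^ p.2 else 0)
      with hFdef
    have hcolbound : ∀ k l : ℕ,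
        ‖F (k, l)‖ ≤ ‖β‖ ^ k * ((b ^ N) ^ k * (‖η l‖ * (C*b) ^ l)) := by
      intro k l
      simp only [hFdef, norm_mul, norm_pow]
      exact mul_le_mul_of_nonneg_left (hterm k l u hu) (by positivity)
    have hcolsum : ∀ k : ℕ, Summable (fun l : ℕ => ‖F (k, l)‖) := by
      intro k
      exact Summable.of_nonneg_of_le (fun l => norm_nonneg _) (hcolbound k)
        ((hTsum.mul_left ((b ^ N) ^ k)).mul_left (‖β‖ ^ k))
    have hF : Summable F := by
      apply Summable.of_norm
      rw [summable_prod_of_nonneg (fun p => norm_nonneg _)]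
      refine ⟨hcolsum, ?_⟩
      apply Summable.of_nonneg_of_le
        (fun k => tsum_nonneg (fun l => norm_nonneg _)) ?_ hM
      intro k
      calc ∑' l : ℕ, ‖F (k, l)‖
          ≤ ∑' l : ℕ, ‖β‖ ^ k * ((b ^ N) ^ k * (‖η l‖ * (C*b) ^ l)) :=
            Summable.tsum_le_tsum (hcolbound k) (hcolsum k)
              ((hTsum.mul_left ((b ^ N) ^ k)).mul_left (‖β‖ ^ k))
        _ = ‖β‖ ^ k * ((b ^ N) ^ k * T) := by
            rw [tsum_mul_left, tsum_mul_left]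
        _ = (‖β‖ * b ^ N) ^ k * T := by rw [mul_pow]; ring
    obtain ⟨S, hS⟩ := hF
    have h1 : HasSum (fun k : ℕ => β ^ k * R (α ^ (-1 - (k:ℤ)) * u)) S :=
      hS.prod_fiberwise (fun k => (hR (α ^ (-1 - (k:ℤ)) * u)).mul_left (β ^ k))
    have hswap : HasSum (fun p : ℕ × ℕ => F (p.2, p.1)) S := by
      have := ((Equiv.prodComm ℕ ℕ).hasSum_iff (f := F) (a := S)).mpr hS
      exact this
    have h2 : HasSum (fun l : ℕ => if N ≤ l then η l / (α ^ l - β) * u ^ l else 0) S := by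
      apply hswap.prod_fiberwise
      intro l
      by_cases hl : N ≤ l
      · rw [if_pos hl]
        have hD : (α : ℂ) ^ l ≠ 0 := pow_ne_zero _ hαne
        have hNl : ‖α‖ ^ N ≤ ‖α‖ ^ l := pow_le_pow_right₀ hA.le hl
        have hDβ : α ^ l - β ≠ 0 := by
          intro h
          have he : α ^ l = β := sub_eq_zero.mp h
          have hn : ‖α‖ ^ l = ‖β‖ := by rw [← norm_pow, he]
          linarith
        have hw : ‖β * (α ^ l)⁻¹‖ < 1 := by
          rw [norm_mul, norm_inv, norm_pow, ← div_eq_mul_inv,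
            div_lt_one (by positivity)]
          linarith
        have hg := (hasSum_geometric_of_norm_lt_one hw).mul_left
          (η l * (α ^ l)⁻¹ * u ^ l)
        have hfun : (fun k : ℕ => F (k, l))
            = fun k : ℕ => (η l * (α ^ l)⁻¹ * u ^ l) * (β * (α ^ l)⁻¹) ^ k := by
          funext k
          simp only [hFdef, if_pos hl]
          have hzp : (α ^ ((-1:ℤ) - k)) ^ l = (α ^ l)⁻¹ * ((α ^ l)⁻¹) ^ k := by
            have hlhs : ((α ^ ((-1:ℤ) - k)) ^ l : ℂ) = α ^ (((-1:ℤ) - k) * l) := by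
              rw [← zpow_natCast (α ^ ((-1:ℤ) - k)) l, ← zpow_mul]
            have hrhs : ((α ^ l)⁻¹ * ((α ^ l)⁻¹) ^ k : ℂ)
                = α ^ (-(l:ℤ)) * α ^ ((-(l:ℤ)) * k) := by
              rw [← zpow_natCast α l, ← zpow_neg, ← zpow_natCast (α ^ (-(l:ℤ))) k,
                ← zpow_mul]
            rw [hlhs, hrhs, ← zpow_add₀ hαne]
            congr 1
            push_cast
            ring
          rw [mul_pow, hzp, mul_pow]
          ring
        have hval : (η l * (α ^ l)⁻¹ * u ^ l) * (1 - β * (α ^ l)⁻¹)⁻¹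
            = η l / (α ^ l - β) * u ^ l := by
          rw [show (1 - β * (α ^ l)⁻¹) = (α ^ l - β) * (α ^ l)⁻¹ by field_simp]
          rw [mul_inv, inv_inv]
          field_simp
        rw [hfun, ← hval]
        exact hg
      · rw [if_neg hl]
        have : (fun k : ℕ => F (k, l)) = fun _ : ℕ => (0:ℂ) := by
          funext k; simp [hFdef, hl]
        rw [this]
        exact hasSum_zero
    have hSψ : S = ψ u := h2.unique (hψ u)
    rwa [hSψ] at h1
  have heq : Set.EqOn (fun x : ℂ => ∑' k : ℕ, β ^ k * R (α ^ (-1 - (k:ℤ)) * x)) ψ K :=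
    fun u hu => (hpt u (hC u hu)).tsum_eq
  exact (tendstoUniformlyOn_tsum_nat hM hbound).congr_right heq
end
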